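/- arXiv:2311.01591 — 4 statements merged into one kernel-verified Lean document; each statement's English description precedes it below -/
import Mathlib

section
/- Let α be a finite type and let p, q : α → ℝ satisfy p h > 0 and q h > 0 for all h. Then for every function D : α → ℝ with 0 < D h < 1 for all h, Σ_h (p h · log(D h) + q h · log(1 − D h)) ≤ Σ_h (p h · log(p h/(p h + q h)) + q h · log(q h/(p h + q h))), with equality if and only if D h = p h/(p h + q h) for all h. -/
open Real Finset

lemma bfts_pointwise (a b x : ℝ) (ha : 0 < a) (hb : 0 < b) (hx : 0 < x) (hx1 : x < 1) :
    a * Real.log x + b * Real.log (1 - x) ≤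
      a * Real.log (a / (a + b)) + b * Real.log (b / (a + b)) ∧
    (a * Real.log x + b * Real.log (1 - x) =
      a * Real.log (a / (a + b)) + b * Real.log (b / (a + b)) ↔ x = a / (a + b)) := by
  have hs : 0 < a + b := by linarith
  set c := a / (a + b) with hc
  have hc0 : 0 < c := div_pos ha hs
  have hc1 : c < 1 := (div_lt_one hs).2 (by linarith)
  have h1x : 0 < 1 - x := by linarith
  have hac : a / c = a + b := by rw [hc]; field_simp
  have h1c : 1 - c = b / (a + b) := by rw [hc]; field_simp; ring
  clear_value c
  -- key: a*(log x - log c) + b*(log(1-x) - log(1-c)) ≤ 0, strict if x ≠ c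
  have key : ∀ y : ℝ, 0 < y → y < 1 →
      a * Real.log y + b * Real.log (1 - y) - (a * Real.log c + b * Real.log (1 - c))
        = a * Real.log (y / c) + b * Real.log ((1 - y) / (1 - c)) := by
    intro y hy hy1
    rw [Real.log_div (ne_of_gt hy) (ne_of_gt hc0),
      Real.log_div (by linarith) (by linarith)]
    ring
  have bound : ∀ y : ℝ, 0 < y → y < 1 →
      a * Real.log (y / c) + b * Real.log ((1 - y) / (1 - c)) ≤ 0 := by
    intro y hy hy1
    have t1 : Real.log (y / c) ≤ y / c - 1 :=
      Real.log_le_sub_one_of_pos (div_pos hy hc0)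
    have t2 : Real.log ((1 - y) / (1 - c)) ≤ (1 - y) / (1 - c) - 1 :=
      Real.log_le_sub_one_of_pos (div_pos (by linarith) (by linarith))
    have e1 : a * (y / c - 1) = (a + b) * y - a := by
      rw [hc]; field_simp
    have e2 : b * ((1 - y) / (1 - c) - 1) = (a + b) * (1 - y) - b := by
      rw [h1c]; field_simp
    nlinarith [mul_le_mul_of_nonneg_left t1 ha.le, mul_le_mul_of_nonneg_left t2 hb.le]
  have strict : x ≠ c →
      a * Real.log (x / c) + b * Real.log ((1 - x) / (1 - c)) < 0 := by
    intro hne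
    have hd : x / c ≠ 1 := by
      intro h
      exact hne ((div_eq_one_iff_eq (ne_of_gt hc0)).1 h)
    have t1 : Real.log (x / c) < x / c - 1 :=
      Real.log_lt_sub_one_of_pos (div_pos hx hc0) hd
    have t2 : Real.log ((1 - x) / (1 - c)) ≤ (1 - x) / (1 - c) - 1 :=
      Real.log_le_sub_one_of_pos (div_pos h1x (by linarith))
    have e1 : a * (x / c - 1) = (a + b) * x - a := by
      rw [hc]; field_simp
    have e2 : b * ((1 - x) / (1 - c) - 1) = (a + b) * (1 - x) - b := by
      rw [h1c]; field_simp
    nlinarith [mul_lt_mul_of_pos_left t1 ha, mul_le_mul_of_nonneg_left t2 hb.le]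
  have hle : a * Real.log x + b * Real.log (1 - x) ≤
      a * Real.log c + b * Real.log (1 - c) := by
    have := bound x hx hx1
    have := key x hx hx1
    linarith
  refine ⟨by rwa [h1c] at hle, ?_⟩
  constructor
  · intro heq
    by_contra hne
    have := strict hne
    have := key x hx hx1
    rw [← h1c] at heq
    linarith
  · intro heq; rw [heq, h1c]

/-- Functional form of the optimal-discriminator step: for strictly positive weight
functions `p, q` on a finite type, any discriminator `D` with values in `(0,1)` satisfies
`∑ (p·log D + q·log (1−D)) ≤ ∑ (p·log (p/(p+q)) + q·log (q/(p+q)))`,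
with equality iff `D = p/(p+q)` pointwise. -/
theorem bfts_optimal_discriminator (α : Type*) [Fintype α] (p q : α → ℝ)
    (hp : ∀ h, 0 < p h) (hq : ∀ h, 0 < q h) :
    ∀ D : α → ℝ, (∀ h, 0 < D h ∧ D h < 1) →
      (∑ h, (p h * Real.log (D h) + q h * Real.log (1 - D h)) ≤
        ∑ h, (p h * Real.log (p h / (p h + q h)) + q h * Real.log (q h / (p h + q h)))) ∧
      ((∑ h, (p h * Real.log (D h) + q h * Real.log (1 - D h)) =
        ∑ h, (p h * Real.log (p h / (p h + q h)) + q h * Real.log (q h / (p h + q h)))) ↔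
        ∀ h, D h = p h / (p h + q h)) := by
  intro D hD
  have pt := fun h => bfts_pointwise (p h) (q h) (D h) (hp h) (hq h) (hD h).1 (hD h).2
  have hle : ∀ h ∈ Finset.univ (α := α),
      p h * Real.log (D h) + q h * Real.log (1 - D h) ≤
      p h * Real.log (p h / (p h + q h)) + q h * Real.log (q h / (p h + q h)) :=
    fun h _ => (pt h).1
  refine ⟨Finset.sum_le_sum hle, ?_⟩
  rw [Finset.sum_eq_sum_iff_of_le hle]
  constructor
  · intro h x; exact (pt x).2.1 (h x (Finset.mem_univ x))
  · intro h x _; exact (pt x).2.2 (h x)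
end

section
/- Let α be a finite type and let p, q : α → ℝ be probability mass functions with full support, i.e., p h > 0 and q h > 0 for all h. Then the supremum, over all functions D : α → ℝ with 0 < D h < 1 for all h, of Σ_h (p h · log(D h) + q h · log(1 − D h)) equals −log 4 + 2·JS(p,q), and this supremum is attained at D h = p h/(p h + q h). -/
open Real Finset

/-- Jensen–Shannon divergence between two probability mass functions on a finite type. -/
noncomputable def JS {α : Type*} [Fintype α] (p q : α → ℝ) : ℝ :=
  (1/2) * ∑ h, p h * Real.log (2 * p h / (p h + q h)) +
  (1/2) * ∑ h, q h * Real.log (2 * q h / (p h + q h))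

lemma bfts_ptwise (a b d : ℝ) (ha : 0 < a) (hb : 0 < b) (hd0 : 0 < d) (hd1 : d < 1) :
    a * Real.log d + b * Real.log (1 - d) ≤
      a * Real.log (a / (a + b)) + b * Real.log (b / (a + b)) := by
  have hs : 0 < a + b := by linarith
  have h1d : 0 < 1 - d := by linarith
  have key1 : Real.log (d * (a + b) / a) ≤ d * (a + b) / a - 1 :=
    Real.log_le_sub_one_of_pos (by positivity)
  have key2 : Real.log ((1 - d) * (a + b) / b) ≤ (1 - d) * (a + b) / b - 1 :=
    Real.log_le_sub_one_of_pos (by positivity)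
  have e1 : Real.log (d * (a + b) / a) = Real.log d - Real.log (a / (a + b)) := by
    rw [Real.log_div (by positivity) ha.ne', Real.log_mul hd0.ne' hs.ne',
      Real.log_div ha.ne' hs.ne']
    ring
  have e2 : Real.log ((1 - d) * (a + b) / b) =
      Real.log (1 - d) - Real.log (b / (a + b)) := by
    rw [Real.log_div (by positivity) hb.ne', Real.log_mul h1d.ne' hs.ne',
      Real.log_div hb.ne' hs.ne']
    ring
  rw [e1] at key1
  rw [e2] at key2
  have h1 : a * (Real.log d - Real.log (a / (a + b))) ≤ d * (a + b) - a := by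
    calc a * (Real.log d - Real.log (a / (a + b))) ≤ a * (d * (a + b) / a - 1) := by
          exact mul_le_mul_of_nonneg_left key1 ha.le
      _ = d * (a + b) - a := by field_simp
  have h2 : b * (Real.log (1 - d) - Real.log (b / (a + b))) ≤ (1 - d) * (a + b) - b := by
    calc b * (Real.log (1 - d) - Real.log (b / (a + b))) ≤ b * ((1 - d) * (a + b) / b - 1) := by
          exact mul_le_mul_of_nonneg_left key2 hb.le
      _ = (1 - d) * (a + b) - b := by field_simp
  nlinarith [h1, h2]

/-- The supremum of the adversarial objective over discriminators `D : α → (0,1)` equals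
`−log 4 + 2·JS(p,q)`, attained at `D = p/(p+q)`. -/
theorem bfts_sup_adversarial_objective (α : Type*) [Fintype α] (p q : α → ℝ)
    (hp : ∀ h, 0 < p h) (hq : ∀ h, 0 < q h)
    (hp1 : ∑ h, p h = 1) (hq1 : ∑ h, q h = 1) :
    IsGreatest
      {v : ℝ | ∃ D : α → ℝ, (∀ h, 0 < D h ∧ D h < 1) ∧
        v = ∑ h, (p h * Real.log (D h) + q h * Real.log (1 - D h))}
      (-Real.log 4 + 2 * JS p q) ∧
    (∑ h, (p h * Real.log (p h / (p h + q h)) +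
        q h * Real.log (1 - p h / (p h + q h))) = -Real.log 4 + 2 * JS p q) := by
  have hs : ∀ h, 0 < p h + q h := fun h => by have := hp h; have := hq h; linarith
  -- rewrite 1 - p/(p+q) = q/(p+q)
  have hcompl : ∀ h, 1 - p h / (p h + q h) = q h / (p h + q h) := by
    intro h
    have := (hs h).ne'
    field_simp
    ring
  -- the value at the optimal D equals -log 4 + 2 JS
  have hval : ∑ h, (p h * Real.log (p h / (p h + q h)) +
      q h * Real.log (1 - p h / (p h + q h))) = -Real.log 4 + 2 * JS p q := by
    have expand : ∀ h, p h * Real.log (2 * p h / (p h + q h)) =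
        p h * Real.log 2 + p h * Real.log (p h / (p h + q h)) := by
      intro h
      have : (2 : ℝ) * p h / (p h + q h) = 2 * (p h / (p h + q h)) := by ring
      rw [this, Real.log_mul two_ne_zero (ne_of_gt (div_pos (hp h) (hs h)))]
      ring
    have expand' : ∀ h, q h * Real.log (2 * q h / (p h + q h)) =
        q h * Real.log 2 + q h * Real.log (q h / (p h + q h)) := by
      intro h
      have : (2 : ℝ) * q h / (p h + q h) = 2 * (q h / (p h + q h)) := by ring
      rw [this, Real.log_mul two_ne_zero (ne_of_gt (div_pos (hq h) (hs h)))]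
      ring
    have l4 : Real.log 4 = 2 * Real.log 2 := by
      rw [show (4 : ℝ) = 2 ^ 2 by norm_num, Real.log_pow]
      push_cast; ring
    simp only [JS, expand, expand', Finset.sum_add_distrib, ← Finset.sum_mul,
      hp1, hq1, hcompl, l4]
    ring
  refine ⟨⟨⟨fun h => p h / (p h + q h), fun h => ⟨div_pos (hp h) (hs h),
      by rw [div_lt_one (hs h)]; linarith [hq h]⟩, hval.symm⟩, ?_⟩, hval⟩
  rintro v ⟨D, hD, rfl⟩
  rw [← hval]
  apply Finset.sum_le_sum
  intro h _
  rw [hcompl h]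
  exact bfts_ptwise (p h) (q h) (D h) (hp h) (hq h) (hD h).1 (hD h).2
end

section
/- Let p, q : α → ℝ be probability mass functions on a finite type α with full support, i.e., p h > 0 and q h > 0 for all h. Then Σ_h p h · log(p h/(p h + q h)) + Σ_h q h · log(q h/(p h + q h)) ≥ −log 4, with equality if and only if p = q. -/
open Real Finset

lemma gibbs_aux {α : Type*} [Fintype α] (p m : α → ℝ) (hp : ∀ h, 0 < p h)
    (hm : ∀ h, 0 < m h) (hs : ∑ h, m h = ∑ h, p h) :
    0 ≤ ∑ h, p h * Real.log (p h / m h) ∧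
    ((∑ h, p h * Real.log (p h / m h)) = 0 ↔ p = m) := by
  have hflip : ∀ h : α, p h * Real.log (p h / m h) = -(p h * Real.log (m h / p h)) := by
    intro h
    rw [Real.log_div (hp h).ne' (hm h).ne', Real.log_div (hm h).ne' (hp h).ne']
    ring
  have key : ∀ h ∈ (univ : Finset α), p h * Real.log (m h / p h) ≤ m h - p h := by
    intro h _
    have h1 := Real.log_le_sub_one_of_pos (div_pos (hm h) (hp h))
    have h2 : p h * (m h / p h - 1) = m h - p h := by
      rw [mul_sub, mul_div_cancel₀ _ (hp h).ne', mul_one]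
    nlinarith [hp h]
  have hsum : ∑ h, p h * Real.log (m h / p h) ≤ ∑ h, (m h - p h) :=
    Finset.sum_le_sum key
  have hzero : ∑ h, (m h - p h) = 0 := by
    rw [Finset.sum_sub_distrib, hs, sub_self]
  have hneg : ∑ h, p h * Real.log (p h / m h) = -∑ h, p h * Real.log (m h / p h) := by
    rw [← Finset.sum_neg_distrib]
    exact Finset.sum_congr rfl fun h _ => hflip h
  constructor
  · rw [hneg]
    linarith [hsum.trans_eq hzero]
  · constructor
    · intro h0
      have heq : ∑ h, p h * Real.log (m h / p h) = ∑ h, (m h - p h) := by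
        rw [hzero]; rw [hneg] at h0; linarith
      have hterm := (Finset.sum_eq_sum_iff_of_le key).mp heq
      funext h
      by_contra hne
      have hne1 : m h / p h ≠ 1 := by
        intro habs
        exact hne ((div_eq_one_iff_eq (hp h).ne').mp habs).symm
      have hlt := Real.log_lt_sub_one_of_pos (div_pos (hm h) (hp h)) hne1
      have h2 : p h * (m h / p h - 1) = m h - p h := by
        rw [mul_sub, mul_div_cancel₀ _ (hp h).ne', mul_one]
      have := hterm h (Finset.mem_univ h)
      nlinarith [hp h]
    · intro hpm
      subst hpm
      have hd : ∀ h : α, p h / p h = 1 := fun h => div_self (hp h).ne'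
      simp [hd]

/-- Lower bound on the BFtS adversarial objective at the optimal discriminator:
the value `−log 4` is achieved exactly when `p = q` (demographic parity). -/
theorem bfts_objective_ge_neg_log_four (α : Type*) [Fintype α] (p q : α → ℝ)
    (hp : ∀ h, 0 < p h) (hq : ∀ h, 0 < q h)
    (hp1 : ∑ h, p h = 1) (hq1 : ∑ h, q h = 1) :
    -Real.log 4 ≤
      ∑ h, p h * Real.log (p h / (p h + q h)) + ∑ h, q h * Real.log (q h / (p h + q h)) ∧
    (∑ h, p h * Real.log (p h / (p h + q h)) + ∑ h, q h * Real.log (q h / (p h + q h)) =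
      -Real.log 4 ↔ p = q) := by
  set m : α → ℝ := fun h => (p h + q h) / 2 with hm_def
  have hm : ∀ h, 0 < m h := fun h => by show (0:ℝ) < (p h + q h) / 2; linarith [hp h, hq h]
  have hms : ∀ r : α → ℝ, (∑ h, r h = 1) → ∑ h, m h = ∑ h, r h := by
    intro r hr
    rw [hr]; simp only [hm_def]
    have : ∑ h, (p h + q h) / 2 = (∑ h, p h + ∑ h, q h) / 2 := by
      rw [← Finset.sum_add_distrib, Finset.sum_div]
    rw [this, hp1, hq1]; norm_num
  obtain ⟨hP0, hPeq⟩ := gibbs_aux p m hp hm (hms p hp1)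
  obtain ⟨hQ0, hQeq⟩ := gibbs_aux q m hq hm (hms q hq1)
  have hsplit : ∀ (r : α → ℝ), (∀ h, 0 < r h) → (∑ h, r h = 1) →
      ∑ h, r h * Real.log (r h / (p h + q h)) = ∑ h, r h * Real.log (r h / m h) - Real.log 2 := by
    intro r hr hr1
    have : ∀ h : α, r h * Real.log (r h / (p h + q h))
        = r h * Real.log (r h / m h) - r h * Real.log 2 := by
      intro h
      have hpq : (0:ℝ) < p h + q h := by linarith [hp h, hq h]
      have : r h / (p h + q h) = (r h / m h) / 2 := by
        simp only [hm_def]; field_simp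
      rw [this, Real.log_div (div_pos (hr h) (hm h)).ne' (by norm_num)]
      ring
    rw [Finset.sum_congr rfl fun h _ => this h, Finset.sum_sub_distrib,
      ← Finset.sum_mul, hr1, one_mul]
  have h4 : Real.log 4 = 2 * Real.log 2 := by
    rw [show (4:ℝ) = 2^2 by norm_num, Real.log_pow]; push_cast; ring
  rw [hsplit p hp hp1, hsplit q hq hq1]
  constructor
  · linarith
  · constructor
    · intro h0
      have hPQ : ∑ h, p h * Real.log (p h / m h) + ∑ h, q h * Real.log (q h / m h) = 0 := by
        linarith
      have hP : ∑ h, p h * Real.log (p h / m h) = 0 := by linarith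
      have hQ : ∑ h, q h * Real.log (q h / m h) = 0 := by linarith
      have hpm := hPeq.mp hP
      have hqm := hQeq.mp hQ
      rw [hpm, hqm]
    · intro hpq
      subst hpq
      have hpm : p = m := by
        funext h; simp only [hm_def]; ring
      simp only [hPeq.mpr hpm, hQeq.mpr hpm]
      linarith
end

section
/- For a fixed p ∈ [0,1], the map q ↦ JS(Ber p, Ber q) is monotone nondecreasing on [p,1] and monotone nonincreasing on [0,p]: if p ≤ q₁ ≤ q₂ ≤ 1 then JS(Ber p, Ber q₁) ≤ JS(Ber p, Ber q₂), and if 0 ≤ q₁ ≤ q₂ ≤ p then JS(Ber p, Ber q₂) ≤ JS(Ber p, Ber q₁). -/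
open Real Finset

/-- Bernoulli probability mass function on `Bool`. -/
noncomputable def Ber (a : ℝ) : Bool → ℝ := fun b => if b then a else 1 - a

noncomputable def Gfun (p q : ℝ) : ℝ :=
  p * Real.log p + (1 - p) * Real.log (1 - p) + q * Real.log q + (1 - q) * Real.log (1 - q)
    + 2 * Real.log 2 - (p + q) * Real.log (p + q)
    - ((1 - p) + (1 - q)) * Real.log ((1 - p) + (1 - q))

lemma termL (x u : ℝ) (hx : 0 ≤ x) (h : x = 0 ∨ 0 < u) :
    x * Real.log (2 * x / u) = x * Real.log x + x * Real.log 2 - x * Real.log u := by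
  rcases eq_or_lt_of_le hx with hx0 | hx0
  · simp [← hx0]
  · have hu : 0 < u := h.resolve_left hx0.ne'
    rw [Real.log_div (by positivity) hu.ne', Real.log_mul two_ne_zero hx0.ne']
    ring

lemma JS_eq (p q : ℝ) (hp0 : 0 ≤ p) (hp1 : p ≤ 1) (hq0 : 0 ≤ q) (hq1 : q ≤ 1) :
    JS (Ber p) (Ber q) = (1/2) * Gfun p q := by
  have h1 : p = 0 ∨ 0 < p + q := by
    rcases eq_or_lt_of_le hp0 with h | h
    · exact Or.inl h.symm
    · exact Or.inr (by linarith)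
  have h2 : q = 0 ∨ 0 < p + q := by
    rcases eq_or_lt_of_le hq0 with h | h
    · exact Or.inl h.symm
    · exact Or.inr (by linarith)
  have h3 : 1 - p = 0 ∨ 0 < (1 - p) + (1 - q) := by
    rcases eq_or_lt_of_le hp1 with h | h
    · exact Or.inl (by linarith)
    · exact Or.inr (by linarith)
  have h4 : 1 - q = 0 ∨ 0 < (1 - p) + (1 - q) := by
    rcases eq_or_lt_of_le hq1 with h | h
    · exact Or.inl (by linarith)
    · exact Or.inr (by linarith)
  simp only [JS, Ber, Fintype.sum_bool, if_true, if_false, Bool.false_eq_true, ite_true, ite_false]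
  rw [termL p (p + q) hp0 h1, termL q (p + q) hq0 h2,
    termL (1 - p) ((1 - p) + (1 - q)) (by linarith) h3,
    termL (1 - q) ((1 - p) + (1 - q)) (by linarith) h4]
  simp only [Gfun]; ring

lemma JS_flip (p q : ℝ) : JS (Ber p) (Ber q) = JS (Ber (1 - p)) (Ber (1 - q)) := by
  simp only [JS, Ber, Fintype.sum_bool, if_true, if_false, Bool.false_eq_true, ite_true, ite_false]
  have e1 : (1:ℝ) - (1 - p) = p := by ring
  have e2 : (1:ℝ) - (1 - q) = q := by ring
  rw [e1, e2]
  ring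

lemma hasDerivG (p q : ℝ) (hq0 : 0 < q) (hq1 : q < 1) (hs : 0 < p + q)
    (hu : 0 < (1 - p) + (1 - q)) :
    HasDerivAt (Gfun p)
      (Real.log q - Real.log (1 - q) - Real.log (p + q) + Real.log ((1 - p) + (1 - q))) q := by
  have h1 : HasDerivAt (fun x : ℝ => x * Real.log x) (Real.log q + 1) q :=
    Real.hasDerivAt_mul_log hq0.ne'
  have hin2 : HasDerivAt (fun x : ℝ => 1 - x) (-1 : ℝ) q := (hasDerivAt_id q).const_sub 1
  have h2 : HasDerivAt (fun x : ℝ => (1 - x) * Real.log (1 - x))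
      ((Real.log (1 - q) + 1) * (-1)) q := by
    have := (Real.hasDerivAt_mul_log (by linarith : (1:ℝ) - q ≠ 0)).comp q hin2
    simpa [Function.comp_def] using this
  have hin3 : HasDerivAt (fun x : ℝ => p + x) (1 : ℝ) q := (hasDerivAt_id q).const_add p
  have h3 : HasDerivAt (fun x : ℝ => (p + x) * Real.log (p + x))
      ((Real.log (p + q) + 1) * 1) q := by
    have := (Real.hasDerivAt_mul_log hs.ne').comp q hin3
    simpa [Function.comp_def] using this
  have hin4 : HasDerivAt (fun x : ℝ => (1 - p) + (1 - x)) (-1 : ℝ) q := hin2.const_add (1 - p)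
  have h4 : HasDerivAt (fun x : ℝ => ((1 - p) + (1 - x)) * Real.log ((1 - p) + (1 - x)))
      ((Real.log ((1 - p) + (1 - q)) + 1) * (-1)) q := by
    have := (Real.hasDerivAt_mul_log hu.ne').comp q hin4
    simpa [Function.comp_def] using this
  have hc1 : HasDerivAt (fun _ : ℝ => p * Real.log p + (1 - p) * Real.log (1 - p)) (0 : ℝ) q :=
    hasDerivAt_const q _
  have hc2 : HasDerivAt (fun _ : ℝ => 2 * Real.log 2) (0 : ℝ) q := hasDerivAt_const q _
  have hG := ((((hc1.add h1).add h2).add hc2).sub h3).sub h4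
  have : Gfun p = fun q =>
      p * Real.log p + (1 - p) * Real.log (1 - p) + q * Real.log q + (1 - q) * Real.log (1 - q)
        + 2 * Real.log 2 - (p + q) * Real.log (p + q)
        - ((1 - p) + (1 - q)) * Real.log ((1 - p) + (1 - q)) := rfl
  rw [this]
  refine hG.congr_deriv ?_
  ring

lemma mono_G (p : ℝ) (hp0 : 0 ≤ p) (hp1 : p ≤ 1) : MonotoneOn (Gfun p) (Set.Icc p 1) := by
  have hcont : Continuous (Gfun p) := by
    unfold Gfun
    have hml : Continuous (fun x : ℝ => x * Real.log x) := Real.continuous_mul_log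
    have c1 : Continuous (fun q : ℝ => q * Real.log q) := hml
    have c2 : Continuous (fun q : ℝ => (1 - q) * Real.log (1 - q)) :=
      hml.comp (continuous_const.sub continuous_id)
    have c3 : Continuous (fun q : ℝ => (p + q) * Real.log (p + q)) :=
      hml.comp (continuous_const.add continuous_id)
    have c4 : Continuous (fun q : ℝ => ((1 - p) + (1 - q)) * Real.log ((1 - p) + (1 - q))) :=
      hml.comp (continuous_const.add (continuous_const.sub continuous_id))
    exact ((((continuous_const.add c1).add c2).add continuous_const).sub c3).sub c4
  apply monotoneOn_of_deriv_nonneg (convex_Icc p 1) hcont.continuousOn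
  · intro q hq
    rw [interior_Icc] at hq
    exact (hasDerivG p q (lt_of_le_of_lt hp0 hq.1) hq.2 (by linarith [hq.1, hq.2])
      (by linarith [hq.1, hq.2])).differentiableAt.differentiableWithinAt
  · intro q hq
    rw [interior_Icc] at hq
    obtain ⟨hpq, hq1⟩ := hq
    have hq0 : 0 < q := lt_of_le_of_lt hp0 hpq
    have hs : 0 < p + q := by linarith
    have hu : 0 < (1 - p) + (1 - q) := by linarith
    rw [(hasDerivG p q hq0 hq1 hs hu).deriv]
    have hle : (1 - q) * (p + q) ≤ q * ((1 - p) + (1 - q)) := by nlinarith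
    have hpos : 0 < (1 - q) * (p + q) := mul_pos (by linarith) hs
    have := Real.log_le_log hpos hle
    rw [Real.log_mul (by linarith : (1:ℝ) - q ≠ 0) hs.ne',
      Real.log_mul hq0.ne' hu.ne'] at this
    linarith

lemma mono_JS (p : ℝ) (hp0 : 0 ≤ p) (hp1 : p ≤ 1) :
    ∀ q₁ q₂ : ℝ, p ≤ q₁ → q₁ ≤ q₂ → q₂ ≤ 1 →
      JS (Ber p) (Ber q₁) ≤ JS (Ber p) (Ber q₂) := by
  intro q₁ q₂ h1 h2 h3
  rw [JS_eq p q₁ hp0 hp1 (le_trans hp0 h1) (le_trans h2 h3),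
    JS_eq p q₂ hp0 hp1 (le_trans hp0 (le_trans h1 h2)) h3]
  have := mono_G p hp0 hp1 ⟨h1, le_trans h2 h3⟩ ⟨le_trans h1 h2, h3⟩ h2
  linarith

/-- For fixed `p ∈ [0,1]`, the map `q ↦ JS (Ber p) (Ber q)` is nondecreasing on `[p,1]`
and nonincreasing on `[0,p]`. -/
theorem JS_Ber_monotone (p : ℝ) (hp : p ∈ Set.Icc (0:ℝ) 1) :
    (∀ q₁ q₂ : ℝ, p ≤ q₁ → q₁ ≤ q₂ → q₂ ≤ 1 →
      JS (Ber p) (Ber q₁) ≤ JS (Ber p) (Ber q₂)) ∧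
    (∀ q₁ q₂ : ℝ, 0 ≤ q₁ → q₁ ≤ q₂ → q₂ ≤ p →
      JS (Ber p) (Ber q₂) ≤ JS (Ber p) (Ber q₁)) := by
  obtain ⟨hp0, hp1⟩ := hp
  constructor
  · exact mono_JS p hp0 hp1
  · intro q₁ q₂ h1 h2 h3
    rw [JS_flip p q₂, JS_flip p q₁]
    exact mono_JS (1 - p) (by linarith) (by linarith) (1 - q₂) (1 - q₁)
      (by linarith) (by linarith) (by linarith)
end
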